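/- Let (E,e) be a vector lattice with designated element e, let f ∈ E be such that f^[2] := sup_{λ∈ℝ}(2λf − λ²e) exists in E, and let t ∈ ℝ. Then (f + te)^[2] exists and equals f^[2] + 2tf + t²e. -/
import Mathlib


/-- If `f^[2]` exists then `(f + t e)^[2]` exists and equals `f^[2] + 2tf + t²e`. -/
theorem square_add_smul_unit {E : Type*} [Lattice E] [AddCommGroup E]
    [Module ℝ E] [CovariantClass E E (· + ·) (· ≤ ·)] [PosSMulMono ℝ E]
    (e : E) (f : E) (s : E)
    (hsq : IsLUB (Set.range fun l : ℝ => (2 * l) • f - (l ^ 2) • e) s)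
    (t : ℝ) :
    IsLUB (Set.range fun l : ℝ => (2 * l) • (f + t • e) - (l ^ 2) • e)
      (s + (2 * t) • f + (t ^ 2) • e) := by
  set c : E := (2 * t) • f + (t ^ 2) • e with hc
  have hrange : (Set.range fun l : ℝ => (2 * l) • (f + t • e) - (l ^ 2) • e)
      = (fun x => x + c) '' (Set.range fun l : ℝ => (2 * l) • f - (l ^ 2) • e) := by
    ext x
    constructor
    · rintro ⟨l, rfl⟩
      exact ⟨(2 * (l - t)) • f - ((l - t) ^ 2) • e, ⟨l - t, rfl⟩, by
        simp only [hc]; module⟩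
    · rintro ⟨y, ⟨l, rfl⟩, rfl⟩
      exact ⟨l + t, by simp only [hc]; module⟩
  have := (OrderIso.addRight c (α := E)).isLUB_image'.2 hsq
  simp only [OrderIso.addRight_apply] at this
  rw [← hrange] at this
  simpa [hc, add_assoc] using this
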